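/- Let F ∈ ℝ^{m×n} have singular value decomposition F = F_k + F_{k⊥}, where F_k is the best rank-k truncation with singular values σ₁ ≥ … ≥ σ_k and F_{k⊥} contains the remaining singular values (collected in the diagonal matrix Σ₂). Let W ∈ ℝ^{m×m} be diagonal with entries in [0,1]. Then 0 ≤ log det(I + FᵀWF) - log det(I + F_kᵀWF_k) ≤ log det(I + Σ₂²). -/

import Mathlib

open Matrix
open scoped MatrixOrder


variable {p q : Type*} [Fintype p] [DecidableEq p] [Fintype q] [DecidableEq q]

lemma one_le_det_one_add {P : Matrix p p ℝ} (hP : P.PosSemidef) :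
    1 ≤ (1 + P).det := by
  have h := hP.isHermitian
  set U : Matrix p p ℝ := (h.eigenvectorUnitary : Matrix p p ℝ) with hUdef
  have hU : U * star U = 1 := (Matrix.mem_unitaryGroup_iff).mp h.eigenvectorUnitary.2
  set d : p → ℝ := RCLike.ofReal ∘ h.eigenvalues with hd
  have hs : P = U * Matrix.diagonal d * star U := h.spectral_theorem
  have h1 : (1 : Matrix p p ℝ) + P = U * (1 + Matrix.diagonal d) * star U := by
    rw [hs, Matrix.mul_add, Matrix.add_mul, Matrix.mul_one, hU]
  rw [h1, det_mul_right_comm, hU, one_mul]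
  have : (1 : Matrix p p ℝ) + Matrix.diagonal d = Matrix.diagonal (fun i => 1 + d i) := by
    rw [← Matrix.diagonal_one, Matrix.diagonal_add]
  rw [this, det_diagonal]
  calc (1:ℝ) = ∏ _i : p, 1 := by simp
    _ ≤ ∏ i, (1 + d i) := Finset.prod_le_prod (fun i _ => zero_le_one)
        (fun i _ => by have : 0 ≤ d i := hP.eigenvalues_nonneg i; linarith)

lemma det_add_mul_self' {M : Matrix p p ℝ} (hM : M.PosDef)
    (G : Matrix p q ℝ) :
    (M + G * Gᵀ).det = M.det * (1 + Gᵀ * M⁻¹ * G).det := by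
  have hdet : IsUnit M.det := hM.isUnit.map detMonoidHom -- maybe wrong; fix below
  have hMi : M * M⁻¹ = 1 := Matrix.mul_nonsing_inv M (isUnit_iff_ne_zero.mpr hM.det_pos.ne')
  have h1 : M + G * Gᵀ = M * (1 + M⁻¹ * G * Gᵀ) := by
    rw [Matrix.mul_add, Matrix.mul_one, ← Matrix.mul_assoc, ← Matrix.mul_assoc, hMi, Matrix.one_mul]
  rw [h1, det_mul]
  congr 1
  rw [det_one_add_mul_comm (M⁻¹ * G) Gᵀ, ← Matrix.mul_assoc]

lemma posSemidef_one_sub_inv_one_add {A : Matrix p p ℝ} (hA : A.PosSemidef) :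
    ((1 : Matrix p p ℝ) - (1 + A)⁻¹).PosSemidef := by
  have hM : (1 + A : Matrix p p ℝ).PosDef := Matrix.PosDef.one.add_posSemidef hA
  have hMi : ((1 + A : Matrix p p ℝ)⁻¹).PosDef := hM.inv
  set N := CFC.sqrt ((1 + A : Matrix p p ℝ)⁻¹) with hN
  have hNN : N * N = (1 + A)⁻¹ := CFC.sqrt_mul_sqrt_self _ hMi.posSemidef.nonneg
  have hNH : Nᴴ = N := (CFC.sqrt_nonneg _).posSemidef.isHermitian
  have hdetN : IsUnit N.det := by
    have h0 : ((1 + A)⁻¹).det ≠ 0 := hMi.det_pos.ne'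
    rw [← hNN, det_mul] at h0
    exact isUnit_iff_ne_zero.mpr fun h => h0 (by rw [h, zero_mul])
  have hNunit : IsUnit N := (Matrix.isUnit_iff_isUnit_det N).mpr hdetN
  have hNMN : N * (1 + A) * N = 1 := by
    have h2 : (N * (1 + A) * N) * N = N := by
      rw [Matrix.mul_assoc, hNN, Matrix.mul_assoc, Matrix.mul_nonsing_inv _
        (isUnit_iff_ne_zero.mpr hM.det_pos.ne'), Matrix.mul_one]
    calc N * (1 + A) * N = (N * (1 + A) * N) * N * N⁻¹ := by
            rw [Matrix.mul_assoc _ N N⁻¹, Matrix.mul_nonsing_inv _ hdetN, Matrix.mul_one]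
      _ = N * N⁻¹ := by rw [h2]
      _ = 1 := Matrix.mul_nonsing_inv _ hdetN
  have key : (1 : Matrix p p ℝ) - (1 + A)⁻¹ = Nᴴ * A * N := by
    rw [hNH, ← hNN, ← hNMN]
    noncomm_ring
  rw [key]
  exact hA.conjTranspose_mul_mul_same N

lemma det_le_det_add {M B : Matrix p p ℝ} (hM : M.PosDef) (hB : B.PosSemidef) :
    M.det ≤ (M + B).det := by
  set R := CFC.sqrt B with hR
  have hRH : Rᴴ = R := (CFC.sqrt_nonneg B).posSemidef.isHermitian
  have hRt : Rᵀ = R := hRH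
  have hBRR : B = R * Rᵀ := by rw [hRt, CFC.sqrt_mul_sqrt_self B hB.nonneg]
  rw [hBRR, det_add_mul_self' hM R]
  have hX : (Rᵀ * M⁻¹ * R).PosSemidef := by
    have h := hM.inv.posSemidef.conjTranspose_mul_mul_same R
    rw [hRH] at h
    rwa [hRt]
  nlinarith [one_le_det_one_add hX, hM.det_pos]

/-- Frozen low-rank approximation error bound:
    0 ≤ log det(I + FᵀWF) - log det(I + FₖᵀWFₖ) ≤ log det(I + Σ₂²). -/
theorem stmt13 {m n : ℕ} (F Fk Fperp : Matrix (Fin m) (Fin n) ℝ)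
    (w : Fin m → ℝ) (hw : ∀ i, 0 ≤ w i) (hw1 : ∀ i, w i ≤ 1)
    (hsplit : F = Fk + Fperp)
    (horth1 : Fk * Fperpᵀ = 0) (horth2 : Fperp * Fkᵀ = 0)
    (horth3 : Fkᵀ * Fperp = 0) (horth4 : Fperpᵀ * Fk = 0)
    (sigma2 : Fin n → ℝ) (V : Matrix (Fin n) (Fin n) ℝ)
    (hV : Vᵀ * V = 1) (hV' : V * Vᵀ = 1)
    (hSigma2 : Fperpᵀ * Fperp = V * Matrix.diagonal (fun i => sigma2 i ^ 2) * Vᵀ) :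
    0 ≤ Real.log (1 + Fᵀ * Matrix.diagonal w * F).det -
          Real.log (1 + Fkᵀ * Matrix.diagonal w * Fk).det ∧
      Real.log (1 + Fᵀ * Matrix.diagonal w * F).det -
          Real.log (1 + Fkᵀ * Matrix.diagonal w * Fk).det ≤
        Real.log (1 + Matrix.diagonal (fun i => sigma2 i ^ 2)).det := by
  classical
  set S : Matrix (Fin m) (Fin m) ℝ := Matrix.diagonal (fun i => Real.sqrt (w i)) with hSdef
  have hSS : S * S = Matrix.diagonal w := by
    have hww : (fun i => Real.sqrt (w i) * Real.sqrt (w i)) = w :=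
      funext fun i => Real.mul_self_sqrt (hw i)
    rw [hSdef, Matrix.diagonal_mul_diagonal, hww]
  have hSt : Sᵀ = S := Matrix.diagonal_transpose _
  have hSH : Sᴴ = S := by rw [conjTranspose_eq_transpose_of_trivial, hSt]
  set G : Matrix (Fin m) (Fin n) ℝ := S * F with hGdef
  set Gk : Matrix (Fin m) (Fin n) ℝ := S * Fk with hGkdef
  set Gp : Matrix (Fin m) (Fin n) ℝ := S * Fperp with hGpdef
  have hG : Fᵀ * Matrix.diagonal w * F = Gᵀ * G := by
    rw [hGdef, Matrix.transpose_mul, hSt, ← hSS]; simp only [Matrix.mul_assoc]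
  have hGk : Fkᵀ * Matrix.diagonal w * Fk = Gkᵀ * Gk := by
    rw [hGkdef, Matrix.transpose_mul, hSt, ← hSS]; simp only [Matrix.mul_assoc]
  -- split of G * Gᵀ
  have hcross1 : Gk * Gpᵀ = 0 := by
    rw [hGkdef, hGpdef, Matrix.transpose_mul, hSt]
    calc S * Fk * (Fperpᵀ * S) = S * (Fk * Fperpᵀ * S) := by simp only [Matrix.mul_assoc]
      _ = 0 := by rw [horth1, Matrix.zero_mul, Matrix.mul_zero]
  have hcross2 : Gp * Gkᵀ = 0 := by
    rw [hGkdef, hGpdef, Matrix.transpose_mul, hSt]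
    calc S * Fperp * (Fkᵀ * S) = S * (Fperp * Fkᵀ * S) := by simp only [Matrix.mul_assoc]
      _ = 0 := by rw [horth2, Matrix.zero_mul, Matrix.mul_zero]
  have hGsum : G = Gk + Gp := by rw [hGdef, hGkdef, hGpdef, hsplit, Matrix.mul_add]
  have hGsplit : G * Gᵀ = Gk * Gkᵀ + Gp * Gpᵀ := by
    rw [hGsum, Matrix.transpose_add, Matrix.add_mul, Matrix.mul_add, Matrix.mul_add,
      hcross1, hcross2]
    abel
  set A : Matrix (Fin m) (Fin m) ℝ := Gk * Gkᵀ with hAdef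
  have hApsd : A.PosSemidef := by
    have h := Matrix.posSemidef_self_mul_conjTranspose Gk
    rwa [conjTranspose_eq_transpose_of_trivial] at h
  set M : Matrix (Fin m) (Fin m) ℝ := 1 + A with hMdef
  have hMpd : M.PosDef := Matrix.PosDef.one.add_posSemidef hApsd
  set X : Matrix (Fin n) (Fin n) ℝ := Gpᵀ * M⁻¹ * Gp with hXdef
  have hXpsd : X.PosSemidef := by
    have h := hMpd.inv.posSemidef.conjTranspose_mul_mul_same Gp
    rwa [conjTranspose_eq_transpose_of_trivial] at h
  -- determinant identities
  have hdet1 : (1 + Fᵀ * Matrix.diagonal w * F).det = M.det * (1 + X).det := by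
    rw [hG, Matrix.det_one_add_mul_comm, hGsplit, hXdef, ← det_add_mul_self' hMpd Gp, hMdef]
    congr 1
    abel
  have hdet2 : (1 + Fkᵀ * Matrix.diagonal w * Fk).det = M.det := by
    rw [hGk, Matrix.det_one_add_mul_comm, hMdef, hAdef]
  -- 1 ≤ (1 + X).det
  have ht1 : 1 ≤ (1 + X).det := one_le_det_one_add hXpsd
  -- upper bound for (1 + X).det
  set D : Matrix (Fin n) (Fin n) ℝ := Matrix.diagonal (fun i => sigma2 i ^ 2) with hDdef
  set Y : Matrix (Fin n) (Fin n) ℝ := Fperpᵀ * Fperp with hYdef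
  have hYX : (Y - X).PosSemidef := by
    have hXeq : X = Fperpᵀ * (S * M⁻¹ * S) * Fperp := by
      rw [hXdef, hGpdef, Matrix.transpose_mul, hSt]; simp only [Matrix.mul_assoc]
    have hC : ((1 : Matrix (Fin m) (Fin m) ℝ) - S * M⁻¹ * S).PosSemidef := by
      have h1 : ((1 : Matrix (Fin m) (Fin m) ℝ) - S * S).PosSemidef := by
        rw [hSS, ← Matrix.diagonal_one, Matrix.diagonal_sub]
        exact Matrix.posSemidef_diagonal_iff.mpr fun i => by have := hw1 i; linarith
      have h2 : (S * (1 - M⁻¹) * S).PosSemidef := by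
        have hpsd : ((1 : Matrix (Fin m) (Fin m) ℝ) - M⁻¹).PosSemidef := by
          rw [hMdef]; exact posSemidef_one_sub_inv_one_add hApsd
        have h := hpsd.conjTranspose_mul_mul_same S
        rwa [hSH] at h
      have hsum := h1.add h2
      have heq : (1 - S * S) + S * (1 - M⁻¹) * S
          = (1 : Matrix (Fin m) (Fin m) ℝ) - S * M⁻¹ * S := by noncomm_ring
      rwa [heq] at hsum
    have h := hC.conjTranspose_mul_mul_same Fperp
    rw [conjTranspose_eq_transpose_of_trivial] at h
    have heq2 : Fperpᵀ * (1 - S * M⁻¹ * S) * Fperp = Y - X := by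
      rw [hYdef, hXeq, Matrix.mul_sub, Matrix.sub_mul, Matrix.mul_one]
    rwa [heq2] at h
  have hdetY : (1 + Y).det = (1 + D).det := by
    rw [hSigma2]
    have : (1 : Matrix (Fin n) (Fin n) ℝ) + V * D * Vᵀ = V * (1 + D) * Vᵀ := by
      rw [Matrix.mul_add, Matrix.add_mul, Matrix.mul_one, hV']
    rw [this, Matrix.det_mul_right_comm, hV', Matrix.one_mul]
  have ht2 : (1 + X).det ≤ (1 + D).det := by
    have hpd : ((1 : Matrix (Fin n) (Fin n) ℝ) + X).PosDef := Matrix.PosDef.one.add_posSemidef hXpsd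
    have h := det_le_det_add hpd hYX
    have heq : (1 + X) + (Y - X) = (1 : Matrix (Fin n) (Fin n) ℝ) + Y := by abel
    rw [heq, hdetY] at h
    exact h
  -- conclude
  have hMdetpos : 0 < M.det := hMpd.det_pos
  have htpos : (0:ℝ) < (1 + X).det := lt_of_lt_of_le one_pos ht1
  have hlog : Real.log (1 + Fᵀ * Matrix.diagonal w * F).det -
      Real.log (1 + Fkᵀ * Matrix.diagonal w * Fk).det = Real.log (1 + X).det := by
    rw [hdet1, hdet2, Real.log_mul hMdetpos.ne' htpos.ne']
    ring
  rw [hlog]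
  exact ⟨Real.log_nonneg ht1, Real.log_le_log htpos ht2⟩
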